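/- If x is obtained from y by a uniform-on-the-left (UL) progressive transfer, then for every f in the class F that is star-shaped from above at 1, the extended Gini social welfare satisfies W_f(x) ≥ W_f(y). -/

import Mathlib

/-- `x` is obtained from `y` by a uniform-on-the-left (UL) progressive
transfer. Since indices are 0-based, position `h : Fin n` has `h + 1`
individuals at or below it, so the mean-preservation condition reads
`(h + 1) · δ = ε`. -/
def ULTransfer {n : ℕ} (x y : Fin n → ℝ) : Prop :=
  Monotone x ∧ Monotone y ∧
  ∃ δ ε : ℝ, 0 < δ ∧ 0 < ε ∧ ∃ h k : Fin n, h < k ∧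
    (∀ i : Fin n, i ≤ h → x i = y i + δ) ∧
    x k = y k - ε ∧
    (∀ g : Fin n, h < g → g ≠ k → x g = y g) ∧
    ((h : ℕ) + 1 : ℝ) * δ = ε

/-- Membership in the class F: `f : [0,1] → [0,1]` continuous, nondecreasing,
with `f 0 = 0` and `f 1 = 1`. -/
def MemF (f : ℝ → ℝ) : Prop :=
  ContinuousOn f (Set.Icc 0 1) ∧ MonotoneOn f (Set.Icc 0 1) ∧
  f 0 = 0 ∧ f 1 = 1 ∧ ∀ t ∈ Set.Icc (0 : ℝ) 1, f t ∈ Set.Icc (0 : ℝ) 1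

/-- `f` is star-shaped (from above) at `ξ ∈ [0,1]`. -/
def StarShapedAt (f : ℝ → ℝ) (ξ : ℝ) : Prop :=
  ∀ s t : ℝ, s ∈ Set.Icc (0 : ℝ) 1 → t ∈ Set.Icc (0 : ℝ) 1 → s ≠ ξ → t ≠ ξ → s < t →
    (f s - f ξ) / (s - ξ) ≤ (f t - f ξ) / (t - ξ)

/-- Extended Gini social welfare. -/
noncomputable def W {n : ℕ} (f : ℝ → ℝ) (z : Fin n → ℝ) : ℝ :=
  ∑ i : Fin n, (f (((n : ℝ) - (i : ℕ)) / n) - f (((n : ℝ) - (i : ℕ) - 1) / n)) * z i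

lemma key_star (f : ℝ → ℝ) (hstar : StarShapedAt f 1) (hf1 : f 1 = 1)
    (a b c M : ℝ) (hc : 0 ≤ c) (hcb : c < b) (hba : b ≤ a) (ha1 : a < 1)
    (hM : 0 < M) (hMeq : M * (b - c) = 1 - a) :
    M * (f b - f c) ≤ 1 - f a := by
  have hb1 : b < 1 := lt_of_le_of_lt hba ha1
  have hc1 : c < 1 := hcb.trans hb1
  have hb0 : 0 ≤ b := hc.trans hcb.le
  have ha0 : 0 ≤ a := hb0.trans hba
  have conv : ∀ s : ℝ, s < 1 → (f s - f 1) / (s - 1) = (1 - f s) / (1 - s) := by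
    intro s hs
    rw [hf1, div_eq_div_iff (by linarith) (by linarith)]; ring
  have p1 : (f b - f c) * (1 - b) ≤ (1 - f b) * (b - c) := by
    have s1 := hstar c b ⟨hc, hc1.le⟩ ⟨hb0, hb1.le⟩ (ne_of_lt hc1) (ne_of_lt hb1) hcb
    rw [conv c hc1, conv b hb1, div_le_div_iff₀ (by linarith) (by linarith)] at s1
    nlinarith [s1]
  have p2 : (1 - f b) * (1 - a) ≤ (1 - f a) * (1 - b) := by
    rcases eq_or_lt_of_le hba with rfl | hlt
    · nlinarith
    · have s2 := hstar b a ⟨hb0, hb1.le⟩ ⟨ha0, ha1.le⟩ (ne_of_lt hb1) (ne_of_lt ha1) hlt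
      rw [conv b hb1, conv a ha1, div_le_div_iff₀ (by linarith) (by linarith)] at s2
      nlinarith [s2]
  have h1b : (0:ℝ) < 1 - b := by linarith
  have q1 : M * (f b - f c) * (1 - b) ≤ (1 - f b) * (M * (b - c)) := by
    nlinarith [mul_le_mul_of_nonneg_left p1 hM.le]
  rw [hMeq] at q1
  have q2 : M * (f b - f c) * (1 - b) ≤ (1 - f a) * (1 - b) := q1.trans p2
  exact le_of_mul_le_mul_right q2 h1b

theorem stmt14 {n : ℕ} (hn : 2 ≤ n) (x y : Fin n → ℝ)
    (hUL : ULTransfer x y)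
    (f : ℝ → ℝ) (hF : MemF f) (hstar : StarShapedAt f 1) :
    W f x ≥ W f y := by
  obtain ⟨-, -, δ, ε, hδ, hε, h, k, hhk, hxle, hxk, hxg, hmean⟩ := hUL
  obtain ⟨hcont, hmono, hf0, hf1, hmap⟩ := hF
  have hn0 : 0 < n := by omega
  have hnR : (0:ℝ) < n := by exact_mod_cast hn0
  set m := (h : ℕ) with hm
  set kk := (k : ℕ) with hkk
  have hmk : m < kk := hhk
  have hkn : kk < n := k.isLt
  set g : ℕ → ℝ := fun j => f (((n:ℝ) - j)/n) with hg
  set d : ℕ → ℝ := fun j => if j ≤ m then δ else if j = kk then -ε else 0 with hdd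
  have hd : ∀ i : Fin n, x i - y i = d (i : ℕ) := by
    intro i
    simp only [hdd]
    by_cases h1 : (i:ℕ) ≤ m
    · rw [if_pos h1, hxle i h1]; ring
    · rw [if_neg h1]
      by_cases h2 : (i:ℕ) = kk
      · rw [if_pos h2]
        have : i = k := Fin.ext h2
        rw [this, hxk]; ring
      · rw [if_neg h2]
        have h3 : h < i := by
          change m < (i:ℕ); omega
        have h4 : i ≠ k := fun hik => h2 (by rw [hik])
        rw [hxg i h3 h4]; ring
  have hsum : W f x - W f y
      = ∑ j ∈ Finset.range n, (g j - g (j+1)) * d j := by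
    rw [W, W, ← Finset.sum_sub_distrib,
      ← Fin.sum_univ_eq_sum_range (fun j => (g j - g (j+1)) * d j) n]
    apply Finset.sum_congr rfl
    intro i _
    have e2 : ((n:ℝ) - (((i:ℕ)+1 : ℕ) : ℝ))/n = ((n:ℝ) - (i:ℕ) - 1)/n := by
      push_cast; ring
    simp only [hg]
    rw [e2, ← hd i]
    ring
  have hsplit : ∑ j ∈ Finset.range n, (g j - g (j+1)) * d j
      = ∑ j ∈ Finset.range (m+1), (g j - g (j+1)) * d j
        + ∑ j ∈ Finset.Ico (m+1) n, (g j - g (j+1)) * d j := by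
    rw [Finset.sum_range_add_sum_Ico _ (by omega : m+1 ≤ n)]
  have hA : ∑ j ∈ Finset.range (m+1), (g j - g (j+1)) * d j
      = δ * (g 0 - g (m+1)) := by
    have : ∀ j ∈ Finset.range (m+1), (g j - g (j+1)) * d j = (g j - g (j+1)) * δ := by
      intro j hj
      rw [Finset.mem_range] at hj
      simp only [hdd]
      rw [if_pos (by omega)]
    rw [Finset.sum_congr rfl this, ← Finset.sum_mul, Finset.sum_range_sub' g (m+1)]
    ring
  have hB : ∑ j ∈ Finset.Ico (m+1) n, (g j - g (j+1)) * d j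
      = -(ε * (g kk - g (kk+1))) := by
    have : ∀ j ∈ Finset.Ico (m+1) n, (g j - g (j+1)) * d j
        = if j = kk then (g j - g (j+1)) * (-ε) else 0 := by
      intro j hj
      rw [Finset.mem_Ico] at hj
      simp only [hdd]
      rw [if_neg (by omega)]
      by_cases h2 : j = kk
      · rw [if_pos h2, if_pos h2]
      · rw [if_neg h2, if_neg h2]; ring
    rw [Finset.sum_congr rfl this, Finset.sum_ite_eq' (Finset.Ico (m+1) n) kk
      (fun j => (g j - g (j+1)) * (-ε)), if_pos (by rw [Finset.mem_Ico]; omega)]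
    ring
  -- identify g values
  have hg0 : g 0 = 1 := by
    simp only [hg]
    rw [show ((n:ℝ) - (0:ℕ))/n = 1 by rw [Nat.cast_zero, sub_zero, div_self hnR.ne']]
    exact hf1
  set a : ℝ := ((n:ℝ) - ((m:ℝ)+1))/n with ha
  set b : ℝ := ((n:ℝ) - (kk:ℝ))/n with hb
  set c : ℝ := ((n:ℝ) - ((kk:ℝ)+1))/n with hc
  have hgm : g (m+1) = f a := by simp only [hg, ha]; push_cast; ring_nf
  have hgk : g kk = f b := by simp only [hg, hb]
  have hgk1 : g (kk+1) = f c := by simp only [hg, hc]; push_cast; ring_nf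
  have hkkR : (kk:ℝ) < n := by exact_mod_cast hkn
  have hmkR : (m:ℝ) + 1 ≤ kk := by exact_mod_cast hmk
  have key := key_star f hstar hf1 a b c ((m:ℝ)+1)
    (by rw [hc]; apply div_nonneg _ hnR.le
        have hx : ((kk:ℝ)+1) ≤ n := by exact_mod_cast hkn
        linarith)
    (by rw [hc, hb, div_lt_div_iff₀ hnR hnR]; nlinarith)
    (by rw [hb, ha, div_le_div_iff₀ hnR hnR]; nlinarith)
    (by rw [ha, div_lt_one hnR]
        have := Nat.cast_nonneg (α := ℝ) m
        linarith)
    (by positivity)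
    (by rw [ha, hb, hc]; field_simp; ring)
  have hdiff : W f x - W f y = δ * (1 - f a) - ε * (f b - f c) := by
    rw [hsum, hsplit, hA, hB, hg0, hgm, hgk, hgk1]; ring
  have hfin : 0 ≤ W f x - W f y := by
    rw [hdiff]
    have hee : ε * (f b - f c) = δ * (((m:ℝ)+1) * (f b - f c)) := by
      rw [← hmean]; ring
    linarith [mul_le_mul_of_nonneg_left key hδ.le, hee]
  linarith
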